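/- arXiv:2504.13433 — 2 statements merged into one kernel-verified Lean document; each statement's English description precedes it below -/
import Mathlib

section
/- For every n ≥ 1, B_{n+1} = G(B_n, 1), i.e., applying the generation operator with starting symbol 1 to the block B_n interpreted as a run-length vector yields exactly the next block B_{n+1} = B_n ++ P_n ++ B_n. -/
/-- Generation operator: expand a run-length vector `R` starting with symbol `s`,
alternating between `s` and `4 - s` from run to run. -/
def G : List ℕ → ℕ → List ℕ
  | [], _ => []
  | r :: rs, s => List.replicate r s ++ G rs (4 - s)

/-- Pillar sequences: `P 1 = [3]`, `P (n+1) = G (P n) 3` for `n ≥ 1`. -/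
def P : ℕ → List ℕ
  | 0 => []
  | 1 => [3]
  | n + 2 => G (P (n + 1)) 3

/-- Block sequences: `B 1 = G [1,3,3,3,1] 1`, `B (n+1) = B n ++ P n ++ B n` for `n ≥ 1`. -/
def B : ℕ → List ℕ
  | 0 => []
  | 1 => G [1, 3, 3, 3, 1] 1
  | n + 2 => B (n + 1) ++ P (n + 1) ++ B (n + 1)

def fl (s : ℕ) : ℕ := 4 - s

lemma G_append (a b : List ℕ) (s : ℕ) :
    G (a ++ b) s = G a s ++ G b (fl^[a.length] s) := by
  induction a generalizing s with
  | nil => simp [G]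
  | cons r rs ih =>
      simp [G, ih, Function.iterate_succ_apply, fl, List.append_assoc]

lemma flip_iter_odd {n : ℕ} (hn : Odd n) :
    fl^[n] 1 = 3 ∧ fl^[n] 3 = 1 := by
  obtain ⟨k, rfl⟩ := hn
  induction k with
  | zero => simp [fl]
  | succ k ih =>
      have h1 : 2 * (k + 1) + 1 = (2 * k + 1) + 1 + 1 := by ring
      refine ⟨?_, ?_⟩
      · rw [h1, Function.iterate_succ_apply', Function.iterate_succ_apply', ih.1]; rfl
      · rw [h1, Function.iterate_succ_apply', Function.iterate_succ_apply', ih.2]; rfl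

lemma G_mem (rs : List ℕ) (s : ℕ) (hs : s = 1 ∨ s = 3) :
    ∀ x ∈ G rs s, x = 1 ∨ x = 3 := by
  induction rs generalizing s with
  | nil => simp [G]
  | cons r rs ih =>
      intro x hx
      simp only [G, List.mem_append] at hx
      rcases hx with hx | hx
      · rcases hs with rfl | rfl <;> simp_all [List.eq_of_mem_replicate hx]
      · exact ih (4 - s) (by rcases hs with rfl | rfl <;> simp) x hx

lemma G_length (rs : List ℕ) (s : ℕ) : (G rs s).length = rs.sum := by
  induction rs generalizing s with
  | nil => rfl
  | cons r rs ih => simp [G, ih]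

lemma sum_mod (l : List ℕ) (h : ∀ x ∈ l, x = 1 ∨ x = 3) :
    l.sum % 2 = l.length % 2 := by
  induction l with
  | nil => rfl
  | cons a l ih =>
      have ha := h a (by simp)
      have hl := ih (fun x hx => h x (by simp [hx]))
      simp only [List.sum_cons, List.length_cons]
      omega

lemma main_step : ∀ n : ℕ, 1 ≤ n →
    G (B n) 1 = B n ++ P n ++ B n ∧ Odd (B n).length ∧ Odd (P n).length ∧
      (∀ x ∈ B n, x = 1 ∨ x = 3) ∧ (∀ x ∈ P n, x = 1 ∨ x = 3) := by
  intro n hn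
  induction n with
  | zero => omega
  | succ n ih =>
      rcases Nat.lt_or_ge n 1 with h | h
      · interval_cases n
        refine ⟨by decide, by decide, by decide, by decide, by decide⟩
      · obtain ⟨m, rfl⟩ : ∃ m, n = m + 1 := ⟨n - 1, by omega⟩
        obtain ⟨hG, hBo, hPo, hBm, hPm⟩ := ih h
        set n := m + 1 with hnm
        have hBdef : B (n + 1) = B n ++ P n ++ B n := rfl
        have hPdef : P (n + 1) = G (P n) 3 := rfl
        have hstep : G (B (n + 1)) 1 = B (n + 1) ++ P (n + 1) ++ B (n + 1) := by
          rw [hBdef, G_append, G_append, List.length_append,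
            Function.iterate_add_apply, (flip_iter_odd hPo).1, (flip_iter_odd hBo).2,
            (flip_iter_odd hBo).1, hG, hPdef]
        have hBmem : ∀ x ∈ B (n + 1), x = 1 ∨ x = 3 := by
          intro x hx
          rw [hBdef] at hx
          simp only [List.mem_append] at hx
          rcases hx with (hx | hx) | hx
          exacts [hBm x hx, hPm x hx, hBm x hx]
        have hPmem : ∀ x ∈ P (n + 1), x = 1 ∨ x = 3 := by
          rw [hPdef]; exact G_mem _ _ (Or.inr rfl)
        refine ⟨hstep, ?_, ?_, hBmem, hPmem⟩
        · rw [hBdef]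
          simp only [List.length_append]
          rw [Nat.odd_iff] at hBo hPo ⊢
          omega
        · rw [hPdef, Nat.odd_iff, G_length, sum_mod _ hPm, ← Nat.odd_iff]
          exact hPo

/-- For every `n ≥ 1`, applying the generation operator with starting symbol `1`
to `B n` (interpreted as a run-length vector) yields exactly
`B (n+1) = B n ++ P n ++ B n`. -/
theorem block_kolakoski_step :
    ∀ n : ℕ, 1 ≤ n → G (B n) 1 = B (n + 1) ∧ B (n + 1) = B n ++ P n ++ B n := by
  intro n hn
  obtain ⟨m, rfl⟩ : ∃ m, n = m + 1 := ⟨n - 1, by omega⟩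
  have hBdef : B (m + 1 + 1) = B (m + 1) ++ P (m + 1) ++ B (m + 1) := rfl
  exact ⟨by rw [hBdef]; exact (main_step _ hn).1, hBdef⟩
end

section
/- For every n ≥ 1, the block length L_n = |B_n| is odd. -/
lemma G_len (R : List ℕ) : ∀ s, (G R s).length = R.sum := by
  induction R with
  | nil => intro s; simp [G]
  | cons r rs ih => intro s; simp [G, ih]

lemma G_sum_mod (R : List ℕ) : ∀ s, s = 1 ∨ s = 3 → (G R s).sum % 2 = R.sum % 2 := by
  induction R with
  | nil => intro s _; simp [G]
  | cons r rs ih =>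
    intro s hs
    have h4 : 4 - s = 1 ∨ 4 - s = 3 := by rcases hs with h | h <;> simp [h]
    have h2 := ih (4 - s) h4
    simp only [G, List.sum_append, List.sum_replicate, smul_eq_mul, List.sum_cons]
    rcases hs with h | h <;> subst h <;> omega

lemma P_sum_odd : ∀ n : ℕ, 1 ≤ n → (P n).sum % 2 = 1 := by
  intro n hn
  induction n with
  | zero => omega
  | succ m ih =>
    match m with
    | 0 => simp [P]
    | k + 1 =>
      have := ih (by omega)
      show (G (P (k + 1)) 3).sum % 2 = 1
      rw [G_sum_mod _ 3 (Or.inr rfl)]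
      exact this

lemma P_len_odd : ∀ n : ℕ, 1 ≤ n → (P n).length % 2 = 1 := by
  intro n hn
  match n with
  | 1 => simp [P]
  | k + 2 =>
    show (G (P (k + 1)) 3).length % 2 = 1
    rw [G_len]
    exact P_sum_odd (k + 1) (by omega)

/-- For every `n ≥ 1`, the block length `L n = |B n|` is odd. -/
theorem block_length_odd : ∀ n : ℕ, 1 ≤ n → Odd (B n).length := by
  intro n hn
  induction n with
  | zero => omega
  | succ m ih =>
    match m with
    | 0 => simp [B, G]; decide
    | k + 1 =>
      have hb := ih (by omega)
      have hp := P_len_odd (k + 1) (by omega)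
      show Odd (B (k + 1) ++ P (k + 1) ++ B (k + 1)).length
      simp only [List.length_append]
      rcases hb with ⟨a, ha⟩
      exact ⟨2 * a + (P (k + 1)).length / 2 + 1, by omega⟩
end
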